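/- (Lemma 4) Let P_1, ..., P_M be independent real-valued random variables (p-values) on a probability space, let α(1) ≤ ... ≤ α(M) be nondecreasing real thresholds, let S₁ ⊆ {1,...,M} with #S₁ = M₁ ≥ 1, let 1 ≤ m ≤ M₁, and set r = M₁ + 1 − m. Suppose β ∈ [0,1] is such that P(P_i ≤ α(r)) ≥ 1 − β for every i ∈ S₁. Let R(ω) denote the Hochberg rejection set computed from P_1(ω), ..., P_M(ω). Then the probability that fewer than m hypotheses of S₁ fail to be rejected satisfies P( #(S₁ ∩ R) ≥ M₁ + 1 − m ) ≥ (1 − β)^{M₁+1−m}; equivalently, the family-wise type II error probability P( #(S₁ \ R) ≥ m ) is at most 1 − (1 − β)^{M₁+1−m}. -/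

import Mathlib

open MeasureTheory ProbabilityTheory
open scoped Classical

/-- Number of p-values among indices `1,...,M` that are at most `α j`. -/
noncomputable def hochE (M : ℕ) (α p : ℕ → ℝ) (j : ℕ) : ℕ :=
  ((Finset.Icc 1 M).filter fun i => p i ≤ α j).card

/-- The set of indices `k ∈ {1,...,M}` with `e_k ≥ k`. -/
noncomputable def hochKset (M : ℕ) (α p : ℕ → ℝ) : Finset ℕ :=
  (Finset.Icc 1 M).filter fun k => k ≤ hochE M α p k

/-- The Hochberg index `K` (`0` if the set is empty). -/
noncomputable def hochK (M : ℕ) (α p : ℕ → ℝ) : ℕ := WithBot.unbotD 0 (hochKset M α p).max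

/-- The Hochberg rejection set. -/
noncomputable def hochR (M : ℕ) (α p : ℕ → ℝ) : Finset ℕ :=
  if hochK M α p = 0 then ∅
  else (Finset.Icc 1 M).filter fun i => p i ≤ α (hochK M α p)

lemma hoch_det (M : ℕ) (α p : ℕ → ℝ) (hα : ∀ j k, 1 ≤ j → j ≤ k → k ≤ M → α j ≤ α k)
    (T : Finset ℕ) (hT : T ⊆ Finset.Icc 1 M) (r : ℕ) (hr1 : 1 ≤ r) (hrM : r ≤ M)
    (hrcard : r ≤ T.card) (hp : ∀ i ∈ T, p i ≤ α r) : T ⊆ hochR M α p := by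
  have he : r ≤ hochE M α p r := by
    have hsub : T ⊆ (Finset.Icc 1 M).filter fun i => p i ≤ α r :=
      fun i hi => Finset.mem_filter.2 ⟨hT hi, hp i hi⟩
    exact le_trans hrcard (Finset.card_le_card hsub)
  have hKmem : r ∈ hochKset M α p :=
    Finset.mem_filter.2 ⟨Finset.mem_Icc.2 ⟨hr1, hrM⟩, he⟩
  have hne : (hochKset M α p).Nonempty := ⟨r, hKmem⟩
  have hKeq : hochK M α p = (hochKset M α p).max' hne := by
    rw [hochK, ← Finset.coe_max' hne]; rfl
  have hrK : r ≤ hochK M α p := hKeq ▸ Finset.le_max' _ _ hKmem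
  have hKmem' : hochK M α p ∈ hochKset M α p := hKeq ▸ Finset.max'_mem _ hne
  have hKM : hochK M α p ≤ M := (Finset.mem_Icc.1 (Finset.mem_filter.1 hKmem').1).2
  have hK0 : hochK M α p ≠ 0 := by omega
  intro i hi
  rw [hochR, if_neg hK0]
  exact Finset.mem_filter.2 ⟨hT hi, le_trans (hp i hi) (hα r _ hr1 hrK hKM)⟩

/-- (Lemma 4) If the `M₁` p-values of the centers in `S₁` each satisfy
`P(P_i ≤ α(M₁+1−m)) ≥ 1 − β`, then the probability that at least `M₁+1−m` hypotheses of
`S₁` are rejected is at least `(1−β)^{M₁+1−m}`; equivalently, the family-wise type II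
error probability (at least `m` hypotheses of `S₁` not rejected) is at most
`1 − (1−β)^{M₁+1−m}`. -/
theorem hochberg_familywise_typeII_bound {Ω : Type*} [MeasurableSpace Ω] (P : Measure Ω)
    [IsProbabilityMeasure P] (M : ℕ) (hM : 1 ≤ M)
    (X : ℕ → Ω → ℝ) (hmeas : ∀ i, Measurable (X i))
    (hindep : iIndepFun
      (fun i : {i // i ∈ Finset.Icc 1 M} => X i.1) P)
    (α : ℕ → ℝ) (hα : ∀ j k, 1 ≤ j → j ≤ k → k ≤ M → α j ≤ α k)
    (S₁ : Finset ℕ) (hS₁ : S₁ ⊆ Finset.Icc 1 M)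
    (M₁ m : ℕ) (hcard : S₁.card = M₁) (hM₁ : 1 ≤ M₁) (hm1 : 1 ≤ m) (hm2 : m ≤ M₁)
    (β : ℝ) (hβ0 : 0 ≤ β) (hβ1 : β ≤ 1)
    (hβ : ∀ i ∈ S₁, ENNReal.ofReal (1 - β) ≤ P {ω | X i ω ≤ α (M₁ + 1 - m)}) :
    ENNReal.ofReal ((1 - β) ^ (M₁ + 1 - m)) ≤
      P {ω | M₁ + 1 - m ≤ (S₁ ∩ hochR M α fun i => X i ω).card} ∧
    P {ω | m ≤ (S₁ \ hochR M α fun i => X i ω).card} ≤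
      ENNReal.ofReal (1 - (1 - β) ^ (M₁ + 1 - m)) := by
  set r := M₁ + 1 - m with hr
  have hr1 : 1 ≤ r := by omega
  have hrM₁ : r ≤ M₁ := by omega
  have hM₁M : M₁ ≤ M := by
    rw [← hcard]
    calc S₁.card ≤ (Finset.Icc 1 M).card := Finset.card_le_card hS₁
    _ = M := by simp
  have hrM : r ≤ M := le_trans hrM₁ hM₁M
  -- choose a subset T of S₁ of cardinality r
  obtain ⟨T, hTS, hTcard⟩ := Finset.exists_subset_card_eq (s := S₁) (n := r) (by omega)
  have hT : T ⊆ Finset.Icc 1 M := hTS.trans hS₁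
  -- the intersection event
  set A : Set Ω := ⋂ i ∈ T, {ω | X i ω ≤ α r} with hA
  have hAmeas : MeasurableSet A := by
    apply MeasurableSet.biInter (Set.to_countable _)
    intro i _
    exact (hmeas i) measurableSet_Iic
  have hAsub : ∀ ω ∈ A, r ≤ (S₁ ∩ hochR M α fun i => X i ω).card := by
    intro ω hω
    have hp : ∀ i ∈ T, X i ω ≤ α r := by
      intro i hi
      exact Set.mem_iInter₂.1 hω i hi
    have hR := hoch_det M α (fun i => X i ω) hα T hT r hr1 hrM (le_of_eq hTcard.symm) hp
    have : T ⊆ S₁ ∩ hochR M α fun i => X i ω :=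
      fun i hi => Finset.mem_inter.2 ⟨hTS hi, hR hi⟩
    calc r = T.card := hTcard.symm
    _ ≤ _ := Finset.card_le_card this
  -- lower bound on P A via independence
  have hPA : ENNReal.ofReal ((1 - β) ^ r) ≤ P A := by
    set T' : Finset {i // i ∈ Finset.Icc 1 M} := T.subtype (· ∈ Finset.Icc 1 M) with hT'
    have hT'card : T'.card = r := by
      rw [hT', Finset.card_subtype, Finset.filter_true_of_mem (fun i hi => hT hi), hTcard]
    have hAeq : A = ⋂ i ∈ T', (X i.1) ⁻¹' Set.Iic (α r) := by
      ext ω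
      simp only [hA, Set.mem_iInter, Set.mem_preimage, Set.mem_Iic, Set.mem_setOf_eq, hT',
        Finset.mem_subtype]
      constructor
      · intro h i hi; exact h i.1 hi
      · intro h i hi; exact h ⟨i, hT hi⟩ hi
    have hprod := hindep.meas_biInter (S := T')
      (s := fun i : {i // i ∈ Finset.Icc 1 M} => (X i.1) ⁻¹' Set.Iic (α r))
      (fun i _ => ⟨Set.Iic (α r), measurableSet_Iic, rfl⟩)
    rw [hAeq, hprod]
    calc ENNReal.ofReal ((1 - β) ^ r) = (ENNReal.ofReal (1 - β)) ^ r := by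
          rw [ENNReal.ofReal_pow (by linarith)]
    _ = ∏ _i ∈ T', ENNReal.ofReal (1 - β) := by rw [Finset.prod_const, hT'card]
    _ ≤ ∏ i ∈ T', P ((X i.1) ⁻¹' Set.Iic (α r)) := by
          apply Finset.prod_le_prod'
          intro i hi
          have hiS : (i : {i // i ∈ Finset.Icc 1 M}).1 ∈ S₁ := hTS (by
            rw [hT', Finset.mem_subtype] at hi; exact hi)
          exact hβ _ hiS
  constructor
  · exact le_trans hPA (measure_mono fun ω hω => hAsub ω hω)
  · have hsub2 : {ω | m ≤ (S₁ \ hochR M α fun i => X i ω).card} ⊆ Aᶜ := by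
      intro ω hω
      intro hωA
      have h1 := hAsub ω hωA
      have h2 : (S₁ ∩ hochR M α fun i => X i ω).card + (S₁ \ hochR M α fun i => X i ω).card
          = S₁.card := Finset.card_inter_add_card_sdiff _ _
      have := Set.mem_setOf_eq ▸ hω
      omega
    calc P {ω | m ≤ (S₁ \ hochR M α fun i => X i ω).card} ≤ P Aᶜ := measure_mono hsub2
    _ = 1 - P A := prob_compl_eq_one_sub hAmeas
    _ ≤ 1 - ENNReal.ofReal ((1 - β) ^ r) := tsub_le_tsub_left hPA 1
    _ = ENNReal.ofReal (1 - (1 - β) ^ r) := by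
          rw [ENNReal.ofReal_sub _ (pow_nonneg (by linarith) r), ENNReal.ofReal_one]
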